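/- In the setting of the slicing of an open convex set Ω ⊆ X = Y ⊕ ℝh, define g : Ω_h → [−∞, +∞) and f : Ω_h → (−∞, +∞] by Ω_y = (g(y), f(y)). If there exists y₀ ∈ Ω_h with f(y₀) = +∞, then f(y) = +∞ for every y ∈ Ω_h; similarly, if g(y₀) = −∞ for some y₀ ∈ Ω_h, then g ≡ −∞ on Ω_h. -/

import Mathlib

lemma slice_aux {X : Type*} [NormedAddCommGroup X] [NormedSpace ℝ X]
    (h : X) (Ω : Set X) (hΩopen : IsOpen Ω) (hΩconv : Convex ℝ Ω)
    (y₀ y : X) (t₀ : ℝ) (ht₀ : y₀ + t₀ • h ∈ Ω)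
    (hub : ¬ BddAbove {t : ℝ | y₀ + t • h ∈ Ω})
    (s : ℝ) (hs : y + s • h ∈ Ω) :
    ¬ BddAbove {t : ℝ | y + t • h ∈ Ω} := by
  have hconv0 : Convex ℝ {t : ℝ | y₀ + t • h ∈ Ω} := by
    intro x hx z hz a b ha hb hab
    have key : y₀ + (a • x + b • z) • h = a • (y₀ + x • h) + b • (y₀ + z • h) := by
      rw [smul_add, smul_add, smul_smul, smul_smul, add_add_add_comm,
        ← add_smul, hab, one_smul, smul_eq_mul, smul_eq_mul, add_smul]
    show y₀ + (a • x + b • z) • h ∈ Ω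
    rw [key]
    exact hΩconv hx hz ha hb hab
  have hmem : ∀ t, t₀ ≤ t → y₀ + t • h ∈ Ω := by
    intro t ht
    obtain ⟨t', ht', htt'⟩ := not_bddAbove_iff.1 hub t
    exact hconv0.ordConnected.out ht₀ ht' ⟨ht, htt'.le⟩
  rw [not_bddAbove_iff]
  intro M
  obtain ⟨ε, εpos, hball⟩ := Metric.isOpen_iff.1 hΩopen _ hs
  set c := ‖y - y₀‖ with hc_def
  have hc : 0 ≤ c := norm_nonneg _
  set lam := ε / (ε + c + 1) with hlam_def
  have hden : (0:ℝ) < ε + c + 1 := by positivity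
  have hlam0 : 0 < lam := by positivity
  have hlam1 : lam < 1 := (div_lt_one hden).2 (by linarith)
  set t := max t₀ ((M - (1 - lam) * s) / lam + 1) with ht_def
  have htmem : y₀ + t • h ∈ Ω := hmem t (le_max_left _ _)
  set u := (1 - lam) * s + lam * t with hu_def
  refine ⟨u, ?_, ?_⟩
  · set w := y + s • h + (lam / (1 - lam)) • (y - y₀) with hw_def
    have h1lam : (0:ℝ) < 1 - lam := by linarith
    have hw : w ∈ Ω := by
      apply hball
      have hd : dist w (y + s • h) = (lam / (1 - lam)) * c := by
        rw [dist_eq_norm]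
        have : w - (y + s • h) = (lam / (1 - lam)) • (y - y₀) := by
          rw [hw_def]; abel
        rw [this, norm_smul, Real.norm_eq_abs,
          abs_of_pos (div_pos hlam0 h1lam)]
      rw [Metric.mem_ball, hd]
      have h1lam_eq : 1 - lam = (c + 1) / (ε + c + 1) := by
        rw [hlam_def]; field_simp; ring
      have : lam / (1 - lam) = ε / (c + 1) := by
        rw [h1lam_eq, hlam_def]
        field_simp
      rw [this, div_mul_eq_mul_div, div_lt_iff₀ (by linarith : (0:ℝ) < c + 1)]
      nlinarith
    have key : y + u • h = (1 - lam) • w + lam • (y₀ + t • h) := by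
      have e1 : (1 - lam) • ((lam / (1 - lam)) • (y - y₀)) = lam • (y - y₀) := by
        rw [smul_smul, mul_div_cancel₀ _ (ne_of_gt h1lam)]
      rw [hw_def, smul_add, e1, hu_def]
      module
    show y + u • h ∈ Ω
    rw [key]
    exact hΩconv hw htmem h1lam.le hlam0.le (by ring)
  · have ht' : (M - (1 - lam) * s) / lam + 1 ≤ t := le_max_right _ _
    have : lam * ((M - (1 - lam) * s) / lam) = M - (1 - lam) * s :=
      mul_div_cancel₀ _ (ne_of_gt hlam0)
    nlinarith

/-- In the slicing of an open convex set `Ω ⊆ X = Y ⊕ ℝh`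
(`Y = ker h*`, `h*(h) = 1`, `Ω_h = {y ∈ Y : ∃ t, y + t h ∈ Ω}`,
`Ω_y = {t : y + t h ∈ Ω} = (g(y), f(y))`): if `f(y₀) = +∞` for some `y₀ ∈ Ω_h`
(i.e. some slice is unbounded above) then `f ≡ +∞` on `Ω_h` (every slice is unbounded
above); similarly if `g(y₀) = −∞` for some `y₀ ∈ Ω_h` then `g ≡ −∞` on `Ω_h`. -/
theorem slice_unbounded_propagates
    {X : Type*} [NormedAddCommGroup X] [NormedSpace ℝ X]
    (hstar : X →L[ℝ] ℝ) (h : X) (hh : hstar h = 1)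
    (Ω : Set X) (hΩopen : IsOpen Ω) (hΩconv : Convex ℝ Ω) :
    ((∃ y₀ : X, (hstar y₀ = 0 ∧ ∃ t : ℝ, y₀ + t • h ∈ Ω) ∧
        ¬ BddAbove {t : ℝ | y₀ + t • h ∈ Ω}) →
      ∀ y : X, (hstar y = 0 ∧ ∃ t : ℝ, y + t • h ∈ Ω) →
        ¬ BddAbove {t : ℝ | y + t • h ∈ Ω}) ∧
    ((∃ y₀ : X, (hstar y₀ = 0 ∧ ∃ t : ℝ, y₀ + t • h ∈ Ω) ∧
        ¬ BddBelow {t : ℝ | y₀ + t • h ∈ Ω}) →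
      ∀ y : X, (hstar y = 0 ∧ ∃ t : ℝ, y + t • h ∈ Ω) →
        ¬ BddBelow {t : ℝ | y + t • h ∈ Ω}) := by
  have hsetneg : ∀ z : X, {t : ℝ | z + t • (-h) ∈ Ω} = -{t : ℝ | z + t • h ∈ Ω} := by
    intro z; ext t
    simp [Set.mem_neg, smul_neg, ← neg_smul]
  constructor
  · rintro ⟨y₀, ⟨-, t₀, ht₀⟩, hub⟩ y ⟨-, s, hs⟩
    exact slice_aux h Ω hΩopen hΩconv y₀ y t₀ ht₀ hub s hs
  · rintro ⟨y₀, ⟨-, t₀, ht₀⟩, hlb⟩ y ⟨-, s, hs⟩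
    have h1 := slice_aux (-h) Ω hΩopen hΩconv y₀ y (-t₀)
      (by simpa [smul_neg, ← neg_smul] using ht₀)
      (by rw [hsetneg, bddAbove_neg]; exact hlb)
      (-s) (by simpa [smul_neg, ← neg_smul] using hs)
    rw [hsetneg] at h1
    rwa [bddAbove_neg] at h1
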